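/- Let p be a prime and G a cyclic group of order p with a fixed generator σ. An F_p[G]-module M is a free F_p[G]-module if and only if M^G = (σ−1)^{p−1}·M, i.e. the submodule of G-fixed elements of M coincides with the image of M under the operator (σ−1)^{p−1} of the group algebra F_p[G]. -/

import Mathlib

open MonoidAlgebra Polynomial Finset
open MonoidAlgebra Polynomial Finset

section Aux
variable {p : ℕ} {G : Type*} [Group G] (σ : G)

theorem fpg_pow_surj (hp : p.Prime) (hord : orderOf σ = p)
    (hgen : ∀ g : G, g ∈ Subgroup.zpowers σ) (g : G) : ∃ n : ℕ, n < p ∧ σ ^ n = g := by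
  obtain ⟨k, hk⟩ := hgen g
  refine ⟨(k % (p : ℤ)).toNat, ?_, ?_⟩
  · have h1 : (0:ℤ) < p := by exact_mod_cast hp.pos
    have := Int.emod_lt_of_pos k h1
    omega
  · have h1 : (0:ℤ) < p := by exact_mod_cast hp.pos
    have h2 : σ ^ ((k % (p:ℤ)).toNat : ℤ) = σ ^ k := by
      rw [Int.toNat_of_nonneg (Int.emod_nonneg k (by positivity))]
      rw [← hord] at *
      exact zpow_mod_orderOf σ k
    rw [← zpow_natCast, h2]; exact hk

theorem fpg_comm (hgen : ∀ g : G, g ∈ Subgroup.zpowers σ)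
    (a b : MonoidAlgebra (ZMod p) G) : a * b = b * a := by
  have hgc : ∀ x y : G, x * y = y * x := by
    intro x y
    obtain ⟨m, rfl⟩ := hgen x; obtain ⟨n, rfl⟩ := hgen y
    rw [← zpow_add, ← zpow_add, add_comm]
  have hs : ∀ (g : G) (c : ZMod p) (b : MonoidAlgebra (ZMod p) G),
      MonoidAlgebra.single g c * b = b * MonoidAlgebra.single g c := by
    intro g c b
    induction b using MonoidAlgebra.induction with
    | zero => rw [zero_mul, mul_zero]
    | single_add g' c' f' _ _ ih' =>
      rw [mul_add, add_mul, ih']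
      congr 1
      rw [MonoidAlgebra.single_mul_single, MonoidAlgebra.single_mul_single,
        hgc, mul_comm c c']
  induction a using MonoidAlgebra.induction with
  | zero => rw [zero_mul, mul_zero]
  | single_add g c f _ _ ih =>
    rw [add_mul, mul_add, ih, hs]

theorem fpg_poly_id (hp : p.Prime) :
    (X - 1 : (ZMod p)[X]) ^ (p - 1) = ∑ i ∈ range p, (X : (ZMod p)[X]) ^ i := by
  haveI := Fact.mk hp
  have hX : (X - 1 : (ZMod p)[X]) ≠ 0 := by
    have := Polynomial.X_sub_C_ne_zero (R := ZMod p) 1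
    simpa using this
  apply mul_left_cancel₀ hX
  have h1 : (X - 1 : (ZMod p)[X]) * (X - 1) ^ (p - 1) = (X - 1) ^ p := by
    rw [← pow_succ']
    congr 1
    have := hp.pos
    omega
  rw [h1, sub_pow_char, one_pow]
  rw [mul_comm, geom_sum_mul]

end Aux

section Aux2
variable {p : ℕ} {G : Type*} [Group G] (σ : G)

theorem fpg_norm (hp : p.Prime) :
    (MonoidAlgebra.of (ZMod p) G σ - 1) ^ (p - 1)
      = ∑ k ∈ range p, (MonoidAlgebra.of (ZMod p) G σ) ^ k := by
  have h := congrArg (Polynomial.aeval (MonoidAlgebra.of (ZMod p) G σ)) (fpg_poly_id hp)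
  simpa [map_pow, map_sub, map_sum] using h

theorem fpg_tpow (hp : p.Prime) (hord : orderOf σ = p) :
    (MonoidAlgebra.of (ZMod p) G σ - 1) ^ p = 0 := by
  haveI := Fact.mk hp
  have hpoly : (X - 1 : (ZMod p)[X]) ^ p = X ^ p - 1 := by
    rw [sub_pow_char, one_pow]
  have h := congrArg (Polynomial.aeval (MonoidAlgebra.of (ZMod p) G σ)) hpoly
  have hσ : σ ^ p = 1 := by rw [← hord]; exact pow_orderOf_eq_one σ
  have h2 : (MonoidAlgebra.of (ZMod p) G σ) ^ p = 1 := by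
    rw [← map_pow, hσ, map_one]
  simp only [map_pow, map_sub, Polynomial.aeval_X, map_one] at h
  rw [h2, sub_self] at h
  exact h

/-- the augmentation map -/
noncomputable def fpgEps (p : ℕ) (G : Type*) [Group G] :
    MonoidAlgebra (ZMod p) G →ₐ[ZMod p] ZMod p :=
  MonoidAlgebra.lift (ZMod p) (ZMod p) G 1

theorem fpg_of_sub_one_mem (hp : p.Prime) (hord : orderOf σ = p)
    (hgen : ∀ g : G, g ∈ Subgroup.zpowers σ) (g : G) :
    MonoidAlgebra.of (ZMod p) G g - 1 ∈
      Submodule.span (MonoidAlgebra (ZMod p) G) {MonoidAlgebra.of (ZMod p) G σ - 1} := by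
  obtain ⟨n, -, rfl⟩ := fpg_pow_surj σ hp hord hgen g
  induction n with
  | zero => simp [MonoidAlgebra.one_def]
  | succ n ih =>
    have key : MonoidAlgebra.of (ZMod p) G (σ ^ (n+1)) - 1
        = MonoidAlgebra.of (ZMod p) G (σ ^ n) * (MonoidAlgebra.of (ZMod p) G σ - 1)
          + (MonoidAlgebra.of (ZMod p) G (σ ^ n) - 1) := by
      rw [pow_succ, map_mul]; noncomm_ring
    rw [key]
    refine add_mem ?_ ih
    have h := Submodule.smul_mem
      (Submodule.span (MonoidAlgebra (ZMod p) G) {MonoidAlgebra.of (ZMod p) G σ - 1})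
      (MonoidAlgebra.of (ZMod p) G (σ ^ n))
      (Submodule.mem_span_singleton_self (MonoidAlgebra.of (ZMod p) G σ - 1))
    rwa [smul_eq_mul] at h

theorem fpg_ker (hp : p.Prime) (hord : orderOf σ = p)
    (hgen : ∀ g : G, g ∈ Subgroup.zpowers σ) (r : MonoidAlgebra (ZMod p) G) :
    r - algebraMap (ZMod p) (MonoidAlgebra (ZMod p) G) (fpgEps p G r) ∈
      Submodule.span (MonoidAlgebra (ZMod p) G) {MonoidAlgebra.of (ZMod p) G σ - 1} := by
  induction r using MonoidAlgebra.induction_on with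
  | of g =>
    have heps : fpgEps p G (MonoidAlgebra.of (ZMod p) G g) = 1 := by
      rw [fpgEps, MonoidAlgebra.lift_of]; rfl
    rw [heps, map_one]
    exact fpg_of_sub_one_mem σ hp hord hgen g
  | add f g hf hg =>
    have : f + g - algebraMap (ZMod p) (MonoidAlgebra (ZMod p) G) (fpgEps p G (f + g))
        = (f - algebraMap (ZMod p) (MonoidAlgebra (ZMod p) G) (fpgEps p G f))
          + (g - algebraMap (ZMod p) (MonoidAlgebra (ZMod p) G) (fpgEps p G g)) := by
      rw [map_add, map_add]; abel
    rw [this]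
    exact add_mem hf hg
  | smul c f hf =>
    have : c • f - algebraMap (ZMod p) (MonoidAlgebra (ZMod p) G) (fpgEps p G (c • f))
        = c • (f - algebraMap (ZMod p) (MonoidAlgebra (ZMod p) G) (fpgEps p G f)) := by
      rw [map_smul, smul_sub]
      congr 1
      rw [smul_eq_mul, map_mul, ← Algebra.smul_def]
    rw [this, Algebra.smul_def, ← smul_eq_mul]
    exact Submodule.smul_mem _ _ hf

end Aux2

section Aux3
variable {p : ℕ} {G : Type*} [Group G] (σ : G)

theorem fpg_ann (hp : p.Prime) (hord : orderOf σ = p)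
    (hgen : ∀ g : G, g ∈ Subgroup.zpowers σ) (c : MonoidAlgebra (ZMod p) G)
    (h : (MonoidAlgebra.of (ZMod p) G σ - 1) * c = 0) :
    ∃ d, c = (MonoidAlgebra.of (ZMod p) G σ - 1) ^ (p - 1) * d := by
  classical
  have hfix : MonoidAlgebra.of (ZMod p) G σ * c = c := by
    have := sub_eq_zero.mp (by rw [← sub_mul]; exact h : MonoidAlgebra.of (ZMod p) G σ * c - 1 * c = 0)
    rwa [one_mul] at this
  -- coefficients are constant
  have hcoef : ∀ y : G, c.coeff (σ⁻¹ * y) = c.coeff y := by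
    intro y
    conv_rhs => rw [← hfix]
    rw [MonoidAlgebra.of_apply, MonoidAlgebra.coeff_single_mul_apply, one_mul]
  have hval : ∀ n : ℕ, c.coeff (σ ^ n) = c.coeff 1 := by
    intro n
    induction n with
    | zero => simp
    | succ n ih =>
      have h1 := hcoef (σ ^ (n + 1))
      rw [pow_succ', inv_mul_cancel_left] at h1
      rw [pow_succ', ← h1]
      exact ih
  have hvalg : ∀ g : G, c.coeff g = c.coeff 1 := by
    intro g
    obtain ⟨n, -, rfl⟩ := fpg_pow_surj σ hp hord hgen g
    exact hval n
  -- c equals (c.coeff 1) times the norm element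
  have hsum : c = ∑ k ∈ Finset.range p, MonoidAlgebra.single (σ ^ k) (c.coeff 1) := by
    ext g
    rw [MonoidAlgebra.coeff_sum, Finset.sum_apply']
    obtain ⟨k₀, hk₀, rfl⟩ := fpg_pow_surj σ hp hord hgen g
    rw [Finset.sum_eq_single_of_mem k₀ (Finset.mem_range.mpr hk₀)]
    · rw [MonoidAlgebra.coeff_single, Finsupp.single_apply, if_pos rfl, hvalg]
    · intro k hk hne
      rw [MonoidAlgebra.coeff_single, Finsupp.single_apply, if_neg]
      intro hcontra
      exact hne (pow_injOn_Iio_orderOf (by rw [hord]; exact Set.mem_Iio.mpr (Finset.mem_range.mp hk))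
        (by rw [hord]; exact Set.mem_Iio.mpr hk₀) hcontra)
  refine ⟨algebraMap (ZMod p) (MonoidAlgebra (ZMod p) G) (c.coeff 1), ?_⟩
  have hnorm := fpg_norm (G := G) σ hp
  have hsmul : ∑ k ∈ Finset.range p, MonoidAlgebra.single (σ ^ k) (c.coeff 1)
      = (c.coeff 1) • ∑ k ∈ Finset.range p, (MonoidAlgebra.of (ZMod p) G σ) ^ k := by
    rw [Finset.smul_sum]
    refine Finset.sum_congr rfl fun k _ => ?_
    rw [← map_pow, MonoidAlgebra.of_apply, MonoidAlgebra.smul_single', mul_one]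
  conv_lhs => rw [hsum]
  rw [hsmul, ← hnorm, Algebra.smul_def]
  exact fpg_comm σ hgen _ _

end Aux3


/-- Let `p` be a prime and `G` a cyclic group of order `p` with a fixed
generator `σ`.  An `F_p[G]`-module `M` is free if and only if the submodule of `G`-fixed
elements of `M` coincides with the image of `M` under the operator `(σ - 1)^(p-1)` of the
group algebra `F_p[G]`. -/
theorem free_iff_fixed_eq_image_of_norm_operator
    {p : ℕ} (hp : p.Prime) {G : Type*} [Group G] (σ : G)
    (hord : orderOf σ = p) (hgen : ∀ g : G, g ∈ Subgroup.zpowers σ)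
    {M : Type*} [AddCommGroup M] [Module (MonoidAlgebra (ZMod p) G) M] :
    Module.Free (MonoidAlgebra (ZMod p) G) M ↔
      {m : M | ∀ g : G, MonoidAlgebra.of (ZMod p) G g • m = m} =
        Set.range (fun m : M => ((MonoidAlgebra.of (ZMod p) G σ - 1) ^ (p - 1)) • m) := by
  classical
  haveI := Fact.mk hp
  set t : MonoidAlgebra (ZMod p) G := MonoidAlgebra.of (ZMod p) G σ - 1 with ht
  have hc : ∀ a b : MonoidAlgebra (ZMod p) G, a * b = b * a := fpg_comm σ hgen
  have htp : t ^ p = 0 := fpg_tpow σ hp hord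
  have hp1 : p - 1 + 1 = p := by have := hp.pos; omega
  -- fixed points are exactly the kernel of t
  have hfixiff : ∀ m : M, (∀ g : G, MonoidAlgebra.of (ZMod p) G g • m = m) ↔ t • m = 0 := by
    intro m
    constructor
    · intro h
      rw [ht, sub_smul, h σ, one_smul, sub_self]
    · intro h0 g
      have hσm : MonoidAlgebra.of (ZMod p) G σ • m = m := by
        rw [ht, sub_smul, one_smul, sub_eq_zero] at h0
        exact h0
      obtain ⟨n, -, rfl⟩ := fpg_pow_surj σ hp hord hgen g
      induction n with
      | zero => rw [pow_zero, map_one, one_smul]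
      | succ n ih =>
        rw [pow_succ', map_mul, mul_smul, ih]
        exact hσm
  constructor
  · -- free → fixed = image
    intro hfree
    have b := Module.Free.chooseBasis (MonoidAlgebra (ZMod p) G) M
    ext m
    simp only [Set.mem_setOf_eq, Set.mem_range]
    constructor
    · intro hm
      have h0 : t • m = 0 := (hfixiff m).mp hm
      have hcoef : ∀ i, t * (b.repr m) i = 0 := by
        intro i
        have h1 : b.repr (t • m) = t • b.repr m := map_smul _ _ _
        rw [h0, map_zero] at h1
        have h2 := congrArg (fun f => f i) h1
        simpa [Finsupp.smul_apply, smul_eq_mul] using h2.symm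
      choose d hd using fun i => fpg_ann σ hp hord hgen _ (hcoef i)
      refine ⟨∑ i ∈ (b.repr m).support, d i • b i, ?_⟩
      show (t ^ (p-1)) • _ = m
      rw [Finset.smul_sum]
      have hterm : ∀ i ∈ (b.repr m).support,
          t ^ (p-1) • d i • b i = (b.repr m) i • b i := by
        intro i _
        rw [← mul_smul, ← hd i]
      rw [Finset.sum_congr rfl hterm]
      have := b.linearCombination_repr m
      rw [Finsupp.linearCombination_apply, Finsupp.sum] at this
      exact this
    · rintro ⟨n, rfl⟩
      refine (hfixiff _).mpr ?_
      show t • t ^ (p-1) • n = 0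
      rw [← mul_smul, ← pow_succ', hp1, htp, zero_smul]
  · -- fixed = image → free
    intro heq
    have hiff : ∀ m : M, t • m = 0 ↔ ∃ n : M, m = t ^ (p-1) • n := by
      intro m
      constructor
      · intro h0
        have hmem : m ∈ {m : M | ∀ g : G, MonoidAlgebra.of (ZMod p) G g • m = m} :=
          (hfixiff m).mpr h0
        rw [heq] at hmem
        obtain ⟨n, hn⟩ := hmem
        exact ⟨n, hn.symm⟩
      · rintro ⟨n, rfl⟩
        rw [← mul_smul, ← pow_succ', hp1, htp, zero_smul]
    -- kernels of powers of t are images of complementary powers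
    have hB1 : ∀ k, 1 ≤ k → k ≤ p - 1 → ∀ m : M, t ^ k • m = 0 →
        ∃ n, m = t ^ (p - k) • n := by
      intro k
      induction k with
      | zero => intro h; exact absurd h (by omega)
      | succ k ih =>
        intro _ hk m hm
        rcases Nat.eq_zero_or_pos k with hk0 | hk1
        · subst hk0
          rw [pow_one] at hm
          simpa using (hiff m).mp hm
        · have hkle : k ≤ p - 1 := by omega
          have h1 : t • (t ^ k • m) = 0 := by
            rw [← mul_smul, ← pow_succ']
            exact hm
          obtain ⟨n, hn⟩ := (hiff _).mp h1
          have harith : k + (p - 1 - k) = p - 1 := by omega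
          have h2 : t ^ k • (m - t ^ (p - 1 - k) • n) = 0 := by
            rw [smul_sub, ← mul_smul, ← pow_add, harith, ← hn, sub_self]
          obtain ⟨n', hn'⟩ := ih hk1 hkle _ h2
          refine ⟨n + t • n', ?_⟩
          have hm2 : m = t ^ (p - k) • n' + t ^ (p - 1 - k) • n := sub_eq_iff_eq_add.mp hn'
          have e1 : p - (k + 1) = p - 1 - k := by omega
          have e2 : p - 1 - k + 1 = p - k := by omega
          rw [hm2, e1, smul_add, ← mul_smul, ← pow_succ, e2]
          exact add_comm _ _
    -- the submodule t • M
    have hsconj : ∀ (r : MonoidAlgebra (ZMod p) G) (n : M), r • t • n = t • r • n := by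
      intro r n; rw [← mul_smul, hc, mul_smul]
    let tIm : Submodule (MonoidAlgebra (ZMod p) G) M :=
      { carrier := Set.range (fun n : M => t • n)
        add_mem' := by rintro _ _ ⟨a, rfl⟩ ⟨b, rfl⟩; exact ⟨a + b, smul_add t a b⟩
        zero_mem' := ⟨0, smul_zero t⟩
        smul_mem' := by rintro r _ ⟨a, rfl⟩; exact ⟨r • a, (hsconj r a).symm⟩ }
    letI : Module (ZMod p) (M ⧸ tIm) :=
      Module.compHom (M ⧸ tIm) (algebraMap (ZMod p) (MonoidAlgebra (ZMod p) G))
    have hsmulV : ∀ (a : ZMod p) (v : M ⧸ tIm),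
        a • v = (algebraMap (ZMod p) (MonoidAlgebra (ZMod p) G) a) • v := fun _ _ => rfl
    have htV : ∀ r ∈ Submodule.span (MonoidAlgebra (ZMod p) G) {t},
        ∀ v : M ⧸ tIm, r • v = 0 := by
      intro r hr v
      obtain ⟨a, rfl⟩ := Submodule.mem_span_singleton.mp hr
      obtain ⟨m, rfl⟩ := Submodule.mkQ_surjective tIm v
      rw [← map_smul, smul_eq_mul, mul_smul, Submodule.mkQ_apply,
        Submodule.Quotient.mk_eq_zero]
      exact tIm.smul_mem a ⟨m, rfl⟩
    have hepsV : ∀ (r : MonoidAlgebra (ZMod p) G) (v : M ⧸ tIm),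
        r • v = (fpgEps p G r) • v := by
      intro r v
      have h1 := htV _ (fpg_ker σ hp hord hgen r) v
      rw [sub_smul, sub_eq_zero] at h1
      rw [hsmulV]
      exact h1
    let b := Module.Basis.ofVectorSpace (ZMod p) (M ⧸ tIm)
    choose lift hlift using fun i => Submodule.mkQ_surjective tIm (b i)
    set N := Submodule.span (MonoidAlgebra (ZMod p) G) (Set.range lift) with hN
    have hS1 : ∀ m : M, ∃ x ∈ N, ∃ y : M, m = x + t • y := by
      intro m
      set c := b.repr (tIm.mkQ m) with hcdef
      set x := c.sum fun i a =>
        (algebraMap (ZMod p) (MonoidAlgebra (ZMod p) G) a) • lift i with hxdef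
      refine ⟨x, ?_, ?_⟩
      · apply Submodule.finsuppSum_mem
        intro i _
        exact Submodule.smul_mem _ _ (Submodule.subset_span ⟨i, rfl⟩)
      · have hqx : tIm.mkQ x = tIm.mkQ m := by
          rw [hxdef, map_finsuppSum]
          have hcong : c.sum (fun i a => tIm.mkQ
              ((algebraMap (ZMod p) (MonoidAlgebra (ZMod p) G) a) • lift i))
              = c.sum fun i a => a • b i := by
            apply Finsupp.sum_congr
            intro i _
            rw [map_smul, hlift, ← hsmulV]
          rw [hcong, ← Finsupp.linearCombination_apply, hcdef, b.linearCombination_repr]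
        have hmx : tIm.mkQ (m - x) = 0 := by rw [map_sub, hqx, sub_self]
        rw [Submodule.mkQ_apply, Submodule.Quotient.mk_eq_zero] at hmx
        obtain ⟨y, hy⟩ := hmx
        have hy2 : m - x = t • y := hy.symm
        exact ⟨y, sub_eq_iff_eq_add'.mp hy2⟩
    have hSk : ∀ (k : ℕ) (m : M), ∃ x ∈ N, ∃ y : M, m = x + t ^ k • y := by
      intro k
      induction k with
      | zero => intro m; exact ⟨0, N.zero_mem, m, by rw [pow_zero, one_smul, zero_add]⟩
      | succ k ih =>
        intro m
        obtain ⟨x, hx, y, hy⟩ := ih m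
        obtain ⟨x2, hx2, y2, hy2⟩ := hS1 y
        refine ⟨x + t ^ k • x2, add_mem hx (N.smul_mem _ hx2), y2, ?_⟩
        rw [hy, hy2, smul_add, ← mul_smul, ← pow_succ, add_assoc]
    have hNtop : ⊤ ≤ N := by
      intro m _
      obtain ⟨x, hx, y, hy⟩ := hSk p m
      rw [htp, zero_smul, add_zero] at hy
      rw [hy]; exact hx
    have hli : LinearIndependent (MonoidAlgebra (ZMod p) G) lift := by
      rw [linearIndependent_iff]
      intro l hl
      by_contra hlne
      have hQp : ¬ ∀ i, l i ∈ Submodule.span (MonoidAlgebra (ZMod p) G) {t ^ p} := by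
        intro hall
        apply hlne
        ext i
        obtain ⟨a, ha⟩ := Submodule.mem_span_singleton.mp (hall i)
        rw [htp, smul_zero] at ha
        rw [← ha]; rfl
      have hex : ∃ k, ¬ ∀ i, l i ∈ Submodule.span (MonoidAlgebra (ZMod p) G) {t ^ k} :=
        ⟨p, hQp⟩
      set e2 := Nat.find hex with he2def
      have hQe2 := Nat.find_spec hex
      have he2le : e2 ≤ p := Nat.find_min' hex hQp
      have hQ0 : ∀ i, l i ∈ Submodule.span (MonoidAlgebra (ZMod p) G) {t ^ 0} := by
        intro i
        exact Submodule.mem_span_singleton.mpr ⟨l i, by rw [pow_zero, smul_eq_mul, mul_one]⟩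
      have he2pos : 1 ≤ e2 := by
        rcases Nat.eq_zero_or_pos e2 with h | h
        · exact absurd hQ0 (h ▸ hQe2)
        · exact h
      set e := e2 - 1 with hedef
      have hPe : ∀ i, l i ∈ Submodule.span (MonoidAlgebra (ZMod p) G) {t ^ e} := by
        by_contra hcon
        exact Nat.find_min hex (show e < e2 by omega) hcon
      have hQe1 : ¬ ∀ i, l i ∈ Submodule.span (MonoidAlgebra (ZMod p) G) {t ^ (e + 1)} := by
        have he : e + 1 = e2 := by omega
        rw [he]; exact hQe2
      obtain ⟨j, hj⟩ := not_forall.mp hQe1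
      have hjne : l j ≠ 0 := fun h => hj (h ▸ Submodule.zero_mem _)
      have hjsupp : j ∈ l.support := Finsupp.mem_support_iff.mpr hjne
      choose s hs using fun i => Submodule.mem_span_singleton.mp (hPe i)
      have hsum0 : t ^ e • (∑ i ∈ l.support, s i • lift i) = 0 := by
        rw [Finset.smul_sum]
        have hcong : ∀ i ∈ l.support, t ^ e • s i • lift i = l i • lift i := by
          intro i _
          rw [← mul_smul, hc, ← smul_eq_mul, hs i]
        rw [Finset.sum_congr rfl hcong]
        rw [Finsupp.linearCombination_apply] at hl
        exact hl
      have hxim : ∃ y : M, (∑ i ∈ l.support, s i • lift i) = t • y := by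
        rcases Nat.eq_zero_or_pos e with he0 | he1
        · rw [he0, pow_zero, one_smul] at hsum0
          exact ⟨0, by rw [hsum0, smul_zero]⟩
        · have hele : e ≤ p - 1 := by have := hp.pos; omega
          obtain ⟨n, hn⟩ := hB1 e he1 hele _ hsum0
          have hpe : p - e = p - e - 1 + 1 := by have := hp.two_le; omega
          refine ⟨t ^ (p - e - 1) • n, ?_⟩
          rw [hn, ← mul_smul, ← pow_succ', ← hpe]
      obtain ⟨y, hy⟩ := hxim
      have hq0 : ∑ i ∈ l.support, (fpgEps p G (s i)) • b i = (0 : M ⧸ tIm) := by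
        have h1 : tIm.mkQ (∑ i ∈ l.support, s i • lift i) = 0 := by
          rw [hy, Submodule.mkQ_apply, Submodule.Quotient.mk_eq_zero]
          exact ⟨y, rfl⟩
        rw [map_sum] at h1
        have h2 : ∀ i ∈ l.support, tIm.mkQ (s i • lift i) = (fpgEps p G (s i)) • b i := by
          intro i _
          rw [map_smul, hlift, hepsV]
        rw [Finset.sum_congr rfl h2] at h1
        exact h1
      have hbli := b.linearIndependent
      rw [linearIndependent_iff'] at hbli
      have hεj : fpgEps p G (s j) = 0 := hbli l.support (fun i => fpgEps p G (s i)) hq0 j hjsupp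
      have hsj := fpg_ker σ hp hord hgen (s j)
      rw [hεj, map_zero, sub_zero] at hsj
      obtain ⟨a, ha⟩ := Submodule.mem_span_singleton.mp hsj
      apply hj
      refine Submodule.mem_span_singleton.mpr ⟨a, ?_⟩
      rw [← hs j, ← ha, smul_eq_mul, smul_eq_mul, smul_eq_mul, pow_succ', ← mul_assoc]
    exact Module.Free.of_basis (Module.Basis.mk hli hNtop)
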